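/- Consistency error identity: Let u_S·ν = u_D·ν on Σ hold for the exact solution and let p_D ∈ H¹(Ω_D). For any discrete pair (v_S^h, v_D^h) with v_D^h·ν = R_h(v_S^h·ν), where R_h is the L²(Σ)-orthogonal projection onto Φ_h^D, one has ⟨(v_S^h − v_D^h)·ν, p_D⟩_Σ = ⟨(v_S^h − Π₀v_S^h)·ν, p_D − R_h p_D⟩_Σ, where Π₀ is the L²(Σ)-orthogonal projection onto piecewise constants (assumed contained in Φ_h^D). Consequently |⟨(v_S^h − v_D^h)·ν, p_D⟩_Σ| ≤ ‖v_S^h − Π₀v_S^h‖_{L²(Σ)} ‖p_D − R_h p_D‖_{L²(Σ)}. -/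

import Mathlib

open RealInnerProductSpace

theorem stmt19 {H : Type*} [NormedAddCommGroup H] [InnerProductSpace ℝ H]
    (Φ Φ₀ : Submodule ℝ H)
    [Φ.HasOrthogonalProjection] [Φ₀.HasOrthogonalProjection]
    (hsub : Φ₀ ≤ Φ)
    (vS pD vDν : H) (hvD : vDν = (Φ.orthogonalProjectionOnto vS : H)) :
    ⟪vS - vDν, pD⟫ =
      ⟪vS - (Φ₀.orthogonalProjectionOnto vS : H), pD - (Φ.orthogonalProjectionOnto pD : H)⟫ ∧
    |⟪vS - vDν, pD⟫| ≤
      ‖vS - (Φ₀.orthogonalProjectionOnto vS : H)‖ * ‖pD - (Φ.orthogonalProjectionOnto pD : H)‖ := by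
  have h1 : vS - vDν ∈ Φᗮ := by
    rw [hvD]; exact Submodule.sub_starProjection_mem_orthogonal (K := Φ) vS
  have h2 : pD - (Φ.orthogonalProjectionOnto pD : H) ∈ Φᗮ :=
    Submodule.sub_starProjection_mem_orthogonal (K := Φ) pD
  have key : ⟪vS - vDν, pD⟫ =
      ⟪vS - (Φ₀.orthogonalProjectionOnto vS : H), pD - (Φ.orthogonalProjectionOnto pD : H)⟫ := by
    have e1 : ⟪vS - vDν, (Φ.orthogonalProjectionOnto pD : H)⟫ = 0 := by
      have := h1 _ (Φ.orthogonalProjectionOnto pD).2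
      rwa [real_inner_comm] at this
    have e2 : ⟪(vDν - (Φ₀.orthogonalProjectionOnto vS : H)), pD - (Φ.orthogonalProjectionOnto pD : H)⟫ = 0 := by
      have hm : vDν - (Φ₀.orthogonalProjectionOnto vS : H) ∈ Φ := by
        rw [hvD]
        exact Φ.sub_mem (Φ.orthogonalProjectionOnto vS).2 (hsub (Φ₀.orthogonalProjectionOnto vS).2)
      exact h2 _ hm
    have : vS - (Φ₀.orthogonalProjectionOnto vS : H) =
        (vS - vDν) + (vDν - (Φ₀.orthogonalProjectionOnto vS : H)) := by abel
    rw [this, inner_add_left, e2, add_zero, inner_sub_right, e1, sub_zero]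
  refine ⟨key, ?_⟩
  rw [key]
  exact abs_real_inner_le_norm _ _
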